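/- For the chain (line) graph on n nodes, if a vector x* satisfies |Σ_{j:(i,j)∈E}(x*_j − x*_i − D_{ji})| ≤ 2 d(i) w̄ for every node i (with realizable D), then for each ℓ ∈ {2,...,n}, |x*_ℓ − x*_{ℓ−1} − D_{ℓ(ℓ−1)}| ≤ min(4ℓ − 6, 4n − 4ℓ + 2)·w̄. -/
import Mathlib


/-- for the chain graph on nodes `1,…,n` (with degrees `d(1)=d(n)=1`,
`d(i)=2` otherwise, and realizable `D_{ji} = pⱼ − pᵢ`), if `x*` satisfies
`|Σ_{j:(i,j)∈E}(x*ⱼ − x*ᵢ − D_{ji})| ≤ 2 d(i) w̄` for every node `i`, then for every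
`ℓ ∈ {2,…,n}`, `|x*_ℓ − x*_{ℓ−1} − D_{ℓ(ℓ−1)}| ≤ min(4ℓ − 6, 4n − 4ℓ + 2)·w̄`. -/
theorem chain_error_bounds (n : ℕ) (hn : 2 ≤ n)
    (wbar : ℝ) (hwbar : 0 < wbar)
    (xstar p : ℕ → ℝ)
    (h1 : |xstar 2 - xstar 1 - (p 2 - p 1)| ≤ 2 * wbar)
    (hend : |xstar (n - 1) - xstar n - (p (n - 1) - p n)| ≤ 2 * wbar)
    (hmid : ∀ i, 2 ≤ i → i ≤ n - 1 →
      |(xstar (i - 1) - xstar i - (p (i - 1) - p i)) +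
       (xstar (i + 1) - xstar i - (p (i + 1) - p i))| ≤ 2 * 2 * wbar) :
    ∀ ℓ, 2 ≤ ℓ → ℓ ≤ n →
      |xstar ℓ - xstar (ℓ - 1) - (p ℓ - p (ℓ - 1))|
        ≤ (min (4 * ℓ - 6) (4 * n - 4 * ℓ + 2) : ℕ) * wbar := by
  set e : ℕ → ℝ := fun ℓ => xstar ℓ - xstar (ℓ - 1) - (p ℓ - p (ℓ - 1)) with he
  -- step bound
  have hstep : ∀ ℓ, 2 ≤ ℓ → ℓ + 1 ≤ n → |e (ℓ + 1) - e ℓ| ≤ 4 * wbar := by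
    intro ℓ h2 hln
    have := hmid ℓ h2 (by omega)
    have heq : (xstar (ℓ - 1) - xstar ℓ - (p (ℓ - 1) - p ℓ)) +
       (xstar (ℓ + 1) - xstar ℓ - (p (ℓ + 1) - p ℓ)) = e (ℓ + 1) - e ℓ := by
      simp only [he, Nat.add_sub_cancel]
      ring
    rw [heq] at this
    linarith
  -- forward bound
  have hfwd : ∀ ℓ, 2 ≤ ℓ → ℓ ≤ n → |e ℓ| ≤ ((4 * ℓ - 6 : ℕ) : ℝ) * wbar := by
    intro ℓ h2
    induction ℓ, h2 using Nat.le_induction with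
    | base => intro _; norm_num; exact h1
    | succ ℓ h2 ih =>
      intro hln
      have hb := ih (by omega)
      have hs := hstep ℓ h2 hln
      have : |e (ℓ + 1)| ≤ |e ℓ| + 4 * wbar := by
        calc |e (ℓ + 1)| = |e ℓ + (e (ℓ + 1) - e ℓ)| := by ring_nf
          _ ≤ |e ℓ| + |e (ℓ + 1) - e ℓ| := abs_add_le _ _
          _ ≤ |e ℓ| + 4 * wbar := by linarith
      have hc : ((4 * (ℓ + 1) - 6 : ℕ) : ℝ) = ((4 * ℓ - 6 : ℕ) : ℝ) + 4 := by
        rw [show 4 * (ℓ + 1) - 6 = (4 * ℓ - 6) + 4 from by omega]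
        push_cast
        ring
      rw [hc]
      linarith
  -- backward bound
  have hbwd : ∀ k ℓ, 2 ≤ ℓ → ℓ + k = n → |e ℓ| ≤ ((4 * k + 2 : ℕ) : ℝ) * wbar := by
    intro k
    induction k with
    | zero =>
      intro ℓ h2 hln
      have hℓ : ℓ = n := by omega
      subst hℓ
      have heq : xstar (ℓ - 1) - xstar ℓ - (p (ℓ - 1) - p ℓ) = -(e ℓ) := by
        simp only [he]; ring
      rw [heq, abs_neg] at hend
      norm_num
      linarith
    | succ k ih =>
      intro ℓ h2 hln
      have hb := ih (ℓ + 1) (by omega) (by omega)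
      have hs := hstep ℓ h2 (by omega)
      have : |e ℓ| ≤ |e (ℓ + 1)| + 4 * wbar := by
        calc |e ℓ| = |e (ℓ + 1) - (e (ℓ + 1) - e ℓ)| := by ring_nf
          _ ≤ |e (ℓ + 1)| + |e (ℓ + 1) - e ℓ| := abs_sub _ _
          _ ≤ |e (ℓ + 1)| + 4 * wbar := by linarith
      have hc : ((4 * (k + 1) + 2 : ℕ) : ℝ) = ((4 * k + 2 : ℕ) : ℝ) + 4 := by
        push_cast; ring
      rw [hc]
      linarith
  intro ℓ h2 hln
  have ha := hfwd ℓ h2 hln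
  have hb := hbwd (n - ℓ) ℓ h2 (by omega)
  have hcast : ((4 * (n - ℓ) + 2 : ℕ) : ℝ) = ((4 * n - 4 * ℓ + 2 : ℕ) : ℝ) := by
    congr 1; omega
  rw [hcast] at hb
  rw [Nat.cast_min]
  rcases min_cases ((4 * ℓ - 6 : ℕ) : ℝ) ((4 * n - 4 * ℓ + 2 : ℕ) : ℝ) with ⟨h, _⟩ | ⟨h, _⟩ <;>
    rw [h] <;> assumption
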